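/- Let λ ∈ ℝᵏ satisfy λ_1 ≥ λ_2 ≥ ⋯ ≥ λ_k ≥ 0, and let s be an integer with 0 < s ≤ k. Then there exists a unique integer ι with 0 ≤ ι < s such that (ι = 0 or λ_ι > (1/(s−ι))·Σ_{ℓ=ι+1}^{k} λ_ℓ) and (1/(s−ι))·Σ_{ℓ=ι+1}^{k} λ_ℓ ≥ λ_{ι+1}. -/
import Mathlib


/-- Lemma 13 of Nikolov: for a nonincreasing vector `λ_1 ≥ ⋯ ≥ λ_k ≥ 0` (indexed `1,…,k`)
and an integer `0 < s ≤ k`, there is a unique integer `0 ≤ ι < s` with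
`λ_ι > (1/(s−ι))·Σ_{ℓ=ι+1}^{k} λ_ℓ ≥ λ_{ι+1}` (convention `λ_0 = +∞`, encoded by the
disjunct `ι = 0`). -/
theorem stmt_7 (k s : ℕ) (lam : ℕ → ℝ) (hs : 0 < s) (hsk : s ≤ k)
    (hmono : ∀ i, 1 ≤ i → i < k → lam (i + 1) ≤ lam i)
    (hnonneg : ∀ i, 1 ≤ i → i ≤ k → 0 ≤ lam i) :
    ∃! ι : ℕ, ι < s ∧
      (ι = 0 ∨
        (1 / ((s : ℝ) - ι)) * (∑ ℓ ∈ Finset.Icc (ι + 1) k, lam ℓ) < lam ι) ∧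
      lam (ι + 1) ≤ (1 / ((s : ℝ) - ι)) * (∑ ℓ ∈ Finset.Icc (ι + 1) k, lam ℓ) := by
  classical
  set S : ℕ → ℝ := fun j => ∑ ℓ ∈ Finset.Icc (j + 1) k, lam ℓ with hSdef
  have hSsplit : ∀ j, j + 1 ≤ k → S j = lam (j + 1) + S (j + 1) := by
    intro j hj
    have hset : Finset.Icc (j + 1) k = insert (j + 1) (Finset.Icc (j + 2) k) := by
      ext x; simp only [Finset.mem_Icc, Finset.mem_insert]; omega
    have hnot : (j + 1) ∉ Finset.Icc (j + 2) k := by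
      simp only [Finset.mem_Icc]; omega
    simp [hSdef, hset, Finset.sum_insert hnot]
  have hSnn : ∀ j, 0 ≤ S j := by
    intro j
    apply Finset.sum_nonneg
    intro i hi
    simp only [Finset.mem_Icc] at hi
    exact hnonneg i (by omega) hi.2
  set B : ℕ → Prop := fun j => ((s : ℝ) - j) * lam (j + 1) ≤ S j with hBdef
  set C : ℕ → Prop := fun j => S j < ((s : ℝ) - j) * lam j with hCdef
  have hcpos : ∀ j : ℕ, j < s → (0 : ℝ) < (s : ℝ) - j := by
    intro j hj
    have : (j : ℝ) < s := by exact_mod_cast hj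
    linarith
  have hconv1 : ∀ j, j < s → (lam (j + 1) ≤ (1 / ((s : ℝ) - j)) * S j ↔ B j) := by
    intro j hj
    rw [hBdef, one_div, inv_mul_eq_div, le_div_iff₀ (hcpos j hj), mul_comm]
  have hconv2 : ∀ j, j < s →
      ((1 / ((s : ℝ) - j)) * S j < lam j ↔ C j) := by
    intro j hj
    rw [hCdef, one_div, inv_mul_eq_div, div_lt_iff₀ (hcpos j hj), mul_comm]
  -- upward propagation
  have hup : ∀ j, j + 1 < s → B j → B (j + 1) ∧ ¬ C (j + 1) := by
    intro j hj hBj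
    have hjk : j + 1 ≤ k := by omega
    have hsplit := hSsplit j hjk
    simp only [hBdef, hCdef] at hBj ⊢
    have hc : (0 : ℝ) < (s : ℝ) - (j + 1) := by
      have := hcpos (j + 1) hj; push_cast at this ⊢; linarith
    push_cast at hBj ⊢
    have hCfail : ((s : ℝ) - ((j : ℝ) + 1)) * lam (j + 1) ≤ S (j + 1) := by
      nlinarith [hBj, hsplit]
    refine ⟨?_, by push_cast; linarith [hCfail]⟩
    have hm : lam (j + 1 + 1) ≤ lam (j + 1) := hmono (j + 1) (by omega) (by omega)
    nlinarith [mul_le_mul_of_nonneg_left hm hc.le, hCfail]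
  -- downward propagation (failure at j gives strict inequality at j+1)
  have hdown : ∀ j, j + 1 < s → ¬ B j → C (j + 1) := by
    intro j hj hBj
    have hjk : j + 1 ≤ k := by omega
    have hsplit := hSsplit j hjk
    simp only [hBdef] at hBj
    push_neg at hBj
    simp only [hCdef]
    push_cast
    nlinarith [hBj, hsplit]
  -- the predicate holds at s - 1
  have hex : ∃ j, j < s ∧ B j := by
    refine ⟨s - 1, by omega, ?_⟩
    simp only [hBdef]
    have h1 : s - 1 + 1 = s := by omega
    have hcast : ((s : ℝ) - ((s - 1 : ℕ) : ℝ)) = 1 := by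
      have : ((s - 1 : ℕ) : ℝ) = (s : ℝ) - 1 := by
        push_cast [Nat.cast_sub hs]; ring
      rw [this]; ring
    rw [h1, hcast, one_mul]
    have hsplit := hSsplit (s - 1) (by omega)
    rw [h1] at hsplit
    have := hSnn s
    linarith
  set ι := Nat.find hex with hι
  obtain ⟨hιs, hBι⟩ := Nat.find_spec hex
  refine ⟨ι, ⟨hιs, ?_, (hconv1 ι hιs).mpr hBι⟩, ?_⟩
  · by_cases h0 : ι = 0
    · exact Or.inl h0
    · right
      rw [hconv2 ι hιs]
      have hmin := Nat.find_min hex (show ι - 1 < ι by omega)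
      push_neg at hmin
      have hBfail : ¬ B (ι - 1) := fun hb => (hmin (by omega)) hb
      have h1 : ι - 1 + 1 = ι := by omega
      have := hdown (ι - 1) (by omega) hBfail
      rw [h1] at this
      exact this
  · rintro y ⟨hy1, hy2, hy3⟩
    have hBy : B y := (hconv1 y hy1).mp hy3
    have hle : ι ≤ y := Nat.find_min' hex ⟨hy1, hBy⟩
    by_contra hne
    have hlt : ι < y := lt_of_le_of_ne hle (fun h => hne h.symm)
    -- propagate B from ι upward, contradicting the strict inequality at y
    have key : ∀ d, ι + d < s → B (ι + d) ∧ (0 < d → ¬ C (ι + d)) := by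
      intro d
      induction d with
      | zero => intro _; exact ⟨hBι, by omega⟩
      | succ n ih =>
        intro h
        have h' : ι + n < s := by omega
        obtain ⟨hBn, _⟩ := ih h'
        have hres := hup (ι + n) (by omega) hBn
        have heq : ι + (n + 1) = (ι + n) + 1 := by omega
        rw [heq]
        exact ⟨hres.1, fun _ => hres.2⟩
    have hd : ι + (y - ι) = y := by omega
    have hkey := key (y - ι) (by omega)
    rw [hd] at hkey
    have hCfail := hkey.2 (by omega)
    rcases hy2 with h0 | hC
    · omega
    · exact hCfail ((hconv2 y hy1).mp hC)
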